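/- For all fixed x, y ∈ I, the map ∂I → ℝ given by w ↦ D_w(x, y) is continuous. -/

import Mathlib

open Filter Topology MeasureTheory

/-- Words in the free monoid on two letters `α = true`, `β = false`. -/
abbrev Word := List Bool

/-- Conjugation: reverse the word and swap the two letters. -/
def wconj (x : Word) : Word := x.reverse.map (fun b => !b)

/-- Fusion multiplicity `m(z; x, y)`: the number of triples `(x₀, w, y₀)` with
`x = x₀w`, `y = w̄y₀` and `z = x₀y₀`. -/
def fm (x y z : Word) : ℕ :=
  ((Finset.range (x.length + 1)).filter (fun k =>
    wconj (x.drop k) <+: y ∧ z = x.take k ++ y.drop (x.length - k))).card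

/-- Maximal alternating blocks of a word. -/
def blocks : Word → List Word
  | [] => []
  | a :: rest =>
    match blocks rest with
    | [] => [[a]]
    | b :: bs => if b.head? = some a then [a] :: b :: bs else (a :: b) :: bs

/-- The quantum integer `[n]_q = (qⁿ - q⁻ⁿ)/(q - q⁻¹)`. -/
noncomputable def qnum (q : ℝ) (n : ℕ) : ℝ := (q ^ n - q⁻¹ ^ n) / (q - q⁻¹)

/-- Quantum dimension `dim_q(x) = ∏ᵢ [|xᵢ|+1]_q` over the maximal alternating blocks. -/
noncomputable def dimq (q : ℝ) (x : Word) : ℝ :=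
  ((blocks x).map (fun b => qnum q (b.length + 1))).prod

/-- Classical dimension `dim₁(x) = ∏ᵢ (|xᵢ|+1)` over the maximal alternating blocks. -/
def dim1 (x : Word) : ℕ := ((blocks x).map (fun b => b.length + 1)).prod
/-- The word `[w]_n` formed by the first `n` letters of an infinite word `w ∈ ∂I`. -/
def bprefix (w : ℕ → Bool) (n : ℕ) : Word := (List.range n).map w

/-- `D_w(x, y) = lim_n dim_q(x[w]_n)/dim_q(y[w]_n)` for `x, y ∈ I` and `w ∈ ∂I`. -/
noncomputable def Dw (q : ℝ) (x y : Word) (w : ℕ → Bool) : ℝ :=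
  limUnder atTop (fun n => dimq q (x ++ bprefix w n) / dimq q (y ++ bprefix w n))

/-- Concatenation of a finite word with an infinite word. -/
def bcat (z : Word) (u : ℕ → Bool) : ℕ → Bool :=
  fun n => if n < z.length then z.getD n false else u (n - z.length)

/-- The strictly alternating infinite word starting with the letter `a`. -/
def walt (a : Bool) : ℕ → Bool := fun n => if n % 2 = 0 then a else !a

/-- `(x|w)`: the length of the longest common prefix of a finite word `x` and an
infinite word `w`. -/
def cpb : Word → (ℕ → Bool) → ℕ
  | [], _ => 0
  | a :: xs, w => if a = w 0 then cpb xs (fun n => w (n + 1)) + 1 else 0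


/-! ### auxiliary -/

noncomputable def Pb (q : ℝ) (L : List Word) : ℝ :=
  (L.map (fun b => qnum q (b.length + 1))).prod

lemma dimq_eq_Pb (q : ℝ) (z : Word) : dimq q z = Pb q (blocks z) := rfl

def consStep (a : Bool) : List Word → List Word
  | [] => [[a]]
  | b :: bs => if b.head? = some a then [a] :: b :: bs else (a :: b) :: bs

lemma blocks_cons (a : Bool) (t : Word) :
    blocks (a :: t) = consStep a (blocks t) := by
  cases h : blocks t <;> simp [blocks, consStep, h]

lemma blocks_ne_nil : ∀ z : Word, ∀ b ∈ blocks z, b ≠ [] := by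
  intro z
  induction z with
  | nil => simp [blocks]
  | cons a t ih =>
    rw [blocks_cons]
    cases h : blocks t with
    | nil => simp [consStep]
    | cons b bs =>
      have hb := ih b (by rw [h]; simp)
      have hbs : ∀ c ∈ bs, c ≠ [] := fun c hc => ih c (by rw [h]; simp [hc])
      simp only [consStep]
      split
      · intro c hc
        simp only [List.mem_cons] at hc
        rcases hc with h1 | h1 | h1
        · simp [h1]
        · rw [h1]; exact hb
        · exact hbs c h1
      · intro c hc
        simp only [List.mem_cons] at hc
        rcases hc with h1 | h1
        · rw [h1]; simp
        · exact hbs c h1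

def glue : List Word → List Word → List Word
  | [], M => M
  | [b], [] => [b]
  | [b], c :: cs => if b.getLast? = c.head? then b :: c :: cs else (b ++ c) :: cs
  | b :: b' :: bs, M => b :: glue (b' :: bs) M

@[simp] lemma glue_nil (M : List Word) : glue [] M = M := rfl
@[simp] lemma glue_single_nil (b : Word) : glue [b] [] = [b] := rfl
lemma glue_single_cons (b c : Word) (cs : List Word) :
    glue [b] (c :: cs) = if b.getLast? = c.head? then b :: c :: cs else (b ++ c) :: cs := rfl
lemma glue_cons_cons (b b' : Word) (bs M : List Word) :
    glue (b :: b' :: bs) M = b :: glue (b' :: bs) M := rfl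

lemma getLast?_cons_ne (a : Bool) (b : Word) (hb : b ≠ []) :
    (a :: b).getLast? = b.getLast? := by
  cases b with
  | nil => exact absurd rfl hb
  | cons x xs => rw [List.getLast?_cons_cons]

lemma consStep_glue (a : Bool) (L M : List Word) (hL : ∀ b ∈ L, b ≠ []) :
    consStep a (glue L M) = glue (consStep a L) M := by
  induction L with
  | nil =>
    cases M with
    | nil => rfl
    | cons c cs =>
      simp only [glue_nil, consStep, glue_single_cons]
      by_cases h : c.head? = some a
      · simp [h]
      · have h2 : ¬ (([a] : Word).getLast? = c.head?) := by
          simp only [List.getLast?_singleton]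
          exact fun he => h he.symm
        rw [if_neg h2, if_neg h]
        simp
  | cons b bs ih =>
    have hb : b ≠ [] := hL b (by simp)
    cases bs with
    | nil =>
      -- L = [b]
      cases M with
      | nil =>
        simp only [glue_single_nil, consStep]
        split <;> rfl
      | cons c cs =>
        rw [glue_single_cons]
        by_cases hmerge : b.getLast? = c.head?
        · rw [if_pos hmerge]
          simp only [consStep]
          by_cases hba : b.head? = some a
          · rw [if_pos hba, if_pos hba]
            rw [glue_cons_cons, glue_single_cons, if_pos hmerge]
          · rw [if_neg hba, if_neg hba]
            rw [glue_single_cons]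
            have : (a :: b).getLast? = c.head? := by
              rw [getLast?_cons_ne a b hb]; exact hmerge
            rw [if_pos this]
        · rw [if_neg hmerge]
          simp only [consStep]
          have hhead : (b ++ c).head? = b.head? := by
            cases b with
            | nil => exact absurd rfl hb
            | cons x xs => simp
          rw [hhead]
          by_cases hba : b.head? = some a
          · rw [if_pos hba, if_pos hba]
            rw [glue_cons_cons, glue_single_cons, if_neg hmerge]
          · rw [if_neg hba, if_neg hba]
            rw [glue_single_cons]
            have : ¬ ((a :: b).getLast? = c.head?) := by
              rw [getLast?_cons_ne a b hb]; exact hmerge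
            rw [if_neg this]
            simp
    | cons b' bs' =>
      rw [glue_cons_cons]
      simp only [consStep]
      by_cases hba : b.head? = some a
      · rw [if_pos hba, if_pos hba]
        rw [glue_cons_cons, glue_cons_cons]
      · rw [if_neg hba, if_neg hba]
        rw [glue_cons_cons]

lemma blocks_append (z v : Word) :
    blocks (z ++ v) = glue (blocks z) (blocks v) := by
  induction z with
  | nil => simp [blocks]
  | cons a t ih =>
    rw [List.cons_append, blocks_cons, ih, blocks_cons,
      consStep_glue a _ _ (blocks_ne_nil t)]

/-! ### positivity -/

section q
variable {q : ℝ} (hq0 : 0 < q) (hq1 : q < 1)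
include hq0 hq1

lemma q_lt_inv : q < q⁻¹ := by
  have h := mul_inv_cancel₀ (ne_of_gt hq0)
  nlinarith

lemma qnum_pos {n : ℕ} (hn : 1 ≤ n) : 0 < qnum q n := by
  have h1 : q ^ n < q⁻¹ ^ n :=
    pow_lt_pow_left₀ (q_lt_inv hq0 hq1) hq0.le (by omega)
  have h2 : q - q⁻¹ < 0 := sub_neg.mpr (q_lt_inv hq0 hq1)
  exact div_pos_of_neg_of_neg (sub_neg.mpr h1) h2

lemma Pb_pos (L : List Word) : 0 < Pb q L := by
  apply List.prod_pos
  intro a ha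
  simp only [List.mem_map] at ha
  obtain ⟨b, _, rfl⟩ := ha
  exact qnum_pos hq0 hq1 (by omega)

end q

@[simp] lemma Pb_nil (q : ℝ) : Pb q [] = 1 := rfl
lemma Pb_cons (q : ℝ) (b : Word) (L : List Word) :
    Pb q (b :: L) = qnum q (b.length + 1) * Pb q L := by
  simp [Pb]

/-! ### Gv : value of the glued product against a single alternating block -/

noncomputable def Gv (q : ℝ) (L : List Word) (a : Bool) (ℓ : ℕ) : ℝ :=
  match L.getLast? with
  | none => qnum q (ℓ + 1)
  | some b => if b.getLast? = some a then Pb q L * qnum q (ℓ + 1)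
              else Pb q L.dropLast * qnum q (b.length + ℓ + 1)

lemma Gv_nil (q : ℝ) (L : List Word) (a : Bool) (ℓ : ℕ) (h : L.getLast? = none) :
    Gv q L a ℓ = qnum q (ℓ + 1) := by
  unfold Gv; rw [h]

lemma Gv_last (q : ℝ) (L : List Word) (a : Bool) (ℓ : ℕ) (b : Word)
    (h : L.getLast? = some b) :
    Gv q L a ℓ = if b.getLast? = some a then Pb q L * qnum q (ℓ + 1)
                 else Pb q L.dropLast * qnum q (b.length + ℓ + 1) := by
  unfold Gv; rw [h]

lemma Pb_glue_single (q : ℝ) (L : List Word) (c : Word) (a : Bool)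
    (hca : c.head? = some a) :
    Pb q (glue L [c]) = Gv q L a c.length := by
  induction L with
  | nil => simp [Gv_nil q [] a c.length rfl, Pb]
  | cons b bs ih =>
    cases bs with
    | nil =>
      rw [glue_single_cons, hca, Gv_last q _ a _ b (by simp)]
      by_cases h : b.getLast? = some a
      · rw [if_pos h, if_pos h]
        simp [Pb]
      · rw [if_neg h, if_neg h]
        simp [Pb]
    | cons b' bs' =>
      rw [glue_cons_cons, Pb_cons, ih]
      cases h : (b' :: bs').getLast? with
      | none => simp at h
      | some d =>
        rw [Gv_last q _ a _ d h, Gv_last q _ a _ d (by rw [List.getLast?_cons_cons, h])]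
        by_cases hd : d.getLast? = some a
        · rw [if_pos hd, if_pos hd]
          simp only [Pb_cons]; ring
        · rw [if_neg hd, if_neg hd, List.dropLast_cons₂]
          simp only [Pb_cons]; ring
lemma Pb_glue_cons (q : ℝ) (L : List Word) (c : Word) (cs : List Word) :
    Pb q (glue L (c :: cs)) = Pb q (glue L [c]) * Pb q cs := by
  induction L with
  | nil => simp [Pb_cons, Pb]
  | cons b bs ih =>
    cases bs with
    | nil =>
      rw [glue_single_cons, glue_single_cons]
      by_cases h : b.getLast? = c.head?
      · rw [if_pos h, if_pos h, Pb_cons, Pb_cons, Pb_cons]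
        simp [Pb]; ring
      · rw [if_neg h, if_neg h, Pb_cons, Pb_cons]
        simp [Pb]
    | cons b' bs' =>
      rw [glue_cons_cons, glue_cons_cons, Pb_cons, Pb_cons, ih]
      ring

/-! ### bprefix and first block -/

@[simp] lemma bprefix_zero (w : ℕ → Bool) : bprefix w 0 = [] := rfl

lemma bprefix_succ (w : ℕ → Bool) (n : ℕ) :
    bprefix w (n + 1) = w 0 :: bprefix (fun i => w (i + 1)) n := by
  simp [bprefix, List.range_succ_eq_map, List.map_map]

@[simp] lemma bprefix_length (w : ℕ → Bool) (n : ℕ) :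
    (bprefix w n).length = n := by simp [bprefix]

@[simp] lemma bprefix_one (w : ℕ → Bool) : bprefix w 1 = [w 0] := by
  rw [bprefix_succ]; rfl

lemma bprefix_ne_nil (w : ℕ → Bool) {n : ℕ} (hn : 1 ≤ n) : bprefix w n ≠ [] := by
  intro h
  have := bprefix_length w n
  rw [h] at this
  simp at this
  omega

lemma bprefix_head (w : ℕ → Bool) {n : ℕ} (hn : 1 ≤ n) :
    (bprefix w n).head? = some (w 0) := by
  obtain ⟨m, rfl⟩ : ∃ m, n = m + 1 := ⟨n - 1, by omega⟩
  rw [bprefix_succ]; rfl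

/-- First maximal alternating block of a word. -/
def fb : Word → Word
  | [] => []
  | [a] => [a]
  | a :: b :: t => if b = a then [a] else a :: fb (b :: t)

@[simp] lemma fb_nil : fb [] = [] := rfl
@[simp] lemma fb_single (a : Bool) : fb [a] = [a] := rfl
lemma fb_cons₂ (a b : Bool) (t : Word) :
    fb (a :: b :: t) = if b = a then [a] else a :: fb (b :: t) := rfl

lemma fb_head : ∀ (a : Bool) (t : Word), ∃ r, fb (a :: t) = a :: r := by
  intro a t
  cases t with
  | nil => exact ⟨[], rfl⟩
  | cons b t' =>
    rw [fb_cons₂]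
    split
    · exact ⟨[], rfl⟩
    · exact ⟨_, rfl⟩

lemma blocks_fb : ∀ z : Word, z ≠ [] → ∃ cs, blocks z = fb z :: cs := by
  intro z
  induction z with
  | nil => intro h; exact absurd rfl h
  | cons a t ih =>
    intro _
    cases t with
    | nil =>
      refine ⟨[], ?_⟩
      rw [blocks_cons]
      rfl
    | cons b t' =>
      obtain ⟨cs, hcs⟩ := ih (by simp)
      obtain ⟨r, hr⟩ := fb_head b t'
      rw [blocks_cons, hcs, fb_cons₂]
      simp only [consStep, hr, List.head?_cons]
      by_cases hba : b = a
      · rw [if_pos (by rw [hba]), if_pos hba]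
        exact ⟨fb (b :: t') :: cs, by rw [hr]⟩
      · rw [if_neg (by simpa using hba), if_neg hba]
        exact ⟨cs, rfl⟩

lemma fb_alt : ∀ (n : ℕ) (w : ℕ → Bool), (∀ i, i + 1 < n → w (i + 1) ≠ w i) →
    fb (bprefix w n) = bprefix w n := by
  intro n
  induction n with
  | zero => intro w _; simp
  | succ m ih =>
    intro w hw
    cases m with
    | zero => simp
    | succ k =>
      have ht := bprefix_succ (fun i => w (i + 1)) k
      rw [bprefix_succ w, ht, fb_cons₂, if_neg (by exact hw 0 (by omega)), ← ht]
      congr 1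
      exact ih _ (fun i hi => hw (i + 1) (by omega))

lemma fb_cut : ∀ (j : ℕ) (w : ℕ → Bool) (n : ℕ),
    (∀ i, i < j → w (i + 1) ≠ w i) → w (j + 1) = w j → j + 1 < n →
    fb (bprefix w n) = bprefix w (j + 1) := by
  intro j
  induction j with
  | zero =>
    intro w n _ hj hn
    obtain ⟨m, rfl⟩ : ∃ m, n = m + 2 := ⟨n - 2, by omega⟩
    rw [bprefix_succ, bprefix_succ, fb_cons₂, if_pos (by exact hj)]
    simp
  | succ k ih =>
    intro w n hw hj hn
    obtain ⟨m, rfl⟩ : ∃ m, n = m + 2 := ⟨n - 2, by omega⟩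
    have ht := bprefix_succ (fun i => w (i + 1)) m
    rw [bprefix_succ w, ht, fb_cons₂, if_neg (by exact hw 0 (by omega)), ← ht,
      show k + 1 + 1 = (k + 1) + 1 from rfl, bprefix_succ w (k + 1)]
    congr 1
    exact ih (fun i => w (i + 1)) (m + 1) (fun i hi => hw (i + 1) (by omega)) hj (by omega)

/-! ### ratio lemma -/

lemma dimq_append (q : ℝ) (z v : Word) :
    dimq q (z ++ v) = Pb q (glue (blocks z) (blocks v)) := by
  rw [dimq_eq_Pb, blocks_append]

lemma ratio_eq {q : ℝ} (hq0 : 0 < q) (hq1 : q < 1) (x y : Word) (w : ℕ → Bool)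
    {n ℓ : ℕ} (hn : 1 ≤ n) (hℓ : 1 ≤ ℓ)
    (hfb : fb (bprefix w n) = bprefix w ℓ) :
    dimq q (x ++ bprefix w n) / dimq q (y ++ bprefix w n)
      = Gv q (blocks x) (w 0) ℓ / Gv q (blocks y) (w 0) ℓ := by
  obtain ⟨cs, hcs⟩ := blocks_fb (bprefix w n) (bprefix_ne_nil w hn)
  rw [hfb] at hcs
  have key : ∀ z : Word, dimq q (z ++ bprefix w n) = Gv q (blocks z) (w 0) ℓ * Pb q cs := by
    intro z
    rw [dimq_append, hcs, Pb_glue_cons, Pb_glue_single q _ _ (w 0) (bprefix_head w hℓ),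
      bprefix_length]
  rw [key x, key y, mul_div_mul_right _ _ (ne_of_gt (Pb_pos hq0 hq1 cs))]

/-! ### the structure of Gv as a function of ℓ -/

noncomputable def Cc (q : ℝ) (L : List Word) (a : Bool) : ℝ :=
  match L.getLast? with
  | none => 1
  | some b => if b.getLast? = some a then Pb q L else Pb q L.dropLast

def Mm (L : List Word) (a : Bool) : ℕ :=
  match L.getLast? with
  | none => 0
  | some b => if b.getLast? = some a then 0 else b.length

lemma Gv_eq (q : ℝ) (L : List Word) (a : Bool) (ℓ : ℕ) :
    Gv q L a ℓ = Cc q L a * qnum q (Mm L a + ℓ + 1) := by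
  cases h : L.getLast? with
  | none =>
    rw [Gv_nil _ _ _ _ h]
    unfold Cc Mm
    rw [h]
    simp
  | some b =>
    rw [Gv_last _ _ _ _ b h]
    unfold Cc Mm
    rw [h]
    by_cases hb : b.getLast? = some a <;> simp [hb]

lemma Cc_none (q : ℝ) (L : List Word) (a : Bool) (h : L.getLast? = none) :
    Cc q L a = 1 := by unfold Cc; rw [h]

lemma Cc_some (q : ℝ) (L : List Word) (a : Bool) (b : Word) (h : L.getLast? = some b) :
    Cc q L a = if b.getLast? = some a then Pb q L else Pb q L.dropLast := by
  unfold Cc; rw [h]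

lemma Cc_pos {q : ℝ} (hq0 : 0 < q) (hq1 : q < 1) (L : List Word) (a : Bool) :
    0 < Cc q L a := by
  cases h : L.getLast? with
  | none => rw [Cc_none q L a h]; exact one_pos
  | some b =>
    rw [Cc_some q L a b h]
    split
    · exact Pb_pos hq0 hq1 L
    · exact Pb_pos hq0 hq1 L.dropLast

lemma Gv_pos {q : ℝ} (hq0 : 0 < q) (hq1 : q < 1) (L : List Word) (a : Bool) (ℓ : ℕ) :
    0 < Gv q L a ℓ := by
  rw [Gv_eq]
  exact mul_pos (Cc_pos hq0 hq1 L a) (qnum_pos hq0 hq1 (by omega))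

/-! ### limits -/

lemma qnum_shift_tendsto {q : ℝ} (hq0 : 0 < q) (hq1 : q < 1) (m : ℕ) :
    Tendsto (fun ℓ : ℕ => qnum q (m + ℓ + 1) * q ^ (ℓ + 1)) atTop
      (𝓝 ((q ^ m * 0 - q⁻¹ ^ m) / (q - q⁻¹))) := by
  have h1 : ∀ ℓ : ℕ, q ^ (m + ℓ + 1) * q ^ (ℓ + 1) = q ^ m * (q ^ 2) ^ (ℓ + 1) := by
    intro ℓ
    rw [← pow_add, ← pow_mul, ← pow_add]
    congr 1
    omega
  have h2 : ∀ ℓ : ℕ, q⁻¹ ^ (m + ℓ + 1) * q ^ (ℓ + 1) = q⁻¹ ^ m := by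
    intro ℓ
    rw [show m + ℓ + 1 = m + (ℓ + 1) from rfl, pow_add, mul_assoc, ← mul_pow,
      inv_mul_cancel₀ (ne_of_gt hq0), one_pow, mul_one]
  have hfun : ∀ ℓ : ℕ, qnum q (m + ℓ + 1) * q ^ (ℓ + 1)
      = (q ^ m * (q ^ 2) ^ (ℓ + 1) - q⁻¹ ^ m) / (q - q⁻¹) := by
    intro ℓ
    rw [qnum, div_mul_eq_mul_div, sub_mul, h1, h2]
  simp only [hfun]
  have hlim : Tendsto (fun ℓ : ℕ => (q ^ 2) ^ (ℓ + 1)) atTop (𝓝 0) := by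
    have h := tendsto_pow_atTop_nhds_zero_of_lt_one (by positivity : (0:ℝ) ≤ q ^ 2)
      (by nlinarith : q ^ 2 < 1)
    exact h.comp (tendsto_add_atTop_nat 1)
  exact ((hlim.const_mul (q ^ m)).sub tendsto_const_nhds).div_const _

noncomputable def rho (q : ℝ) (L M : List Word) (a : Bool) : ℝ :=
  (Cc q L a * ((q ^ (Mm L a) * 0 - q⁻¹ ^ (Mm L a)) / (q - q⁻¹))) /
  (Cc q M a * ((q ^ (Mm M a) * 0 - q⁻¹ ^ (Mm M a)) / (q - q⁻¹)))

lemma nu_pos {q : ℝ} (hq0 : 0 < q) (hq1 : q < 1) (m : ℕ) :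
    0 < (q ^ m * 0 - q⁻¹ ^ m) / (q - q⁻¹) := by
  apply div_pos_of_neg_of_neg
  · have := pow_pos (inv_pos.mpr hq0) m
    nlinarith
  · exact sub_neg.mpr (q_lt_inv hq0 hq1)

lemma Gv_ratio_tendsto {q : ℝ} (hq0 : 0 < q) (hq1 : q < 1) (L M : List Word) (a : Bool) :
    Tendsto (fun ℓ : ℕ => Gv q L a ℓ / Gv q M a ℓ) atTop (𝓝 (rho q L M a)) := by
  have hfun : ∀ ℓ : ℕ, Gv q L a ℓ / Gv q M a ℓ
      = (Cc q L a * (qnum q (Mm L a + ℓ + 1) * q ^ (ℓ + 1))) /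
        (Cc q M a * (qnum q (Mm M a + ℓ + 1) * q ^ (ℓ + 1))) := by
    intro ℓ
    rw [Gv_eq, Gv_eq, ← mul_assoc, ← mul_assoc,
      mul_div_mul_right _ _ (pow_ne_zero _ (ne_of_gt hq0))]
  simp only [hfun]
  exact Tendsto.div ((qnum_shift_tendsto hq0 hq1 (Mm L a)).const_mul _)
    ((qnum_shift_tendsto hq0 hq1 (Mm M a)).const_mul _)
    (ne_of_gt (mul_pos (Cc_pos hq0 hq1 M a) (nu_pos hq0 hq1 (Mm M a))))

/-! ### evaluation of Dw -/

lemma Dw_eq_finite {q : ℝ} (hq0 : 0 < q) (hq1 : q < 1) (x y : Word) (w : ℕ → Bool)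
    (h : ∃ i, w (i + 1) = w i) :
    Dw q x y w = Gv q (blocks x) (w 0) (Nat.find h + 1) /
      Gv q (blocks y) (w 0) (Nat.find h + 1) := by
  apply Filter.Tendsto.limUnder_eq
  apply Tendsto.congr' _ tendsto_const_nhds
  refine eventually_atTop.mpr ⟨Nat.find h + 2, fun n hn => ?_⟩
  exact (ratio_eq hq0 hq1 x y w (by omega) (by omega)
    (fb_cut (Nat.find h) w n (fun i hi => Nat.find_min h hi) (Nat.find_spec h)
      (by omega))).symm

lemma Dw_eq_infinite {q : ℝ} (hq0 : 0 < q) (hq1 : q < 1) (x y : Word) (w : ℕ → Bool)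
    (h : ∀ i, w (i + 1) ≠ w i) :
    Dw q x y w = rho q (blocks x) (blocks y) (w 0) := by
  apply Filter.Tendsto.limUnder_eq
  apply Tendsto.congr' _ (Gv_ratio_tendsto hq0 hq1 (blocks x) (blocks y) (w 0))
  refine eventually_atTop.mpr ⟨1, fun n hn => ?_⟩
  exact (ratio_eq hq0 hq1 x y w hn hn (fb_alt n w (fun i _ => h i))).symm


/-- For all fixed `x, y ∈ I`, the map `∂I → ℝ`, `w ↦ D_w(x, y)` is
continuous (for the product topology on `∂I = ℕ → {α, β}`). -/
theorem Dw_continuous (q : ℝ) (hq0 : 0 < q) (hq1 : q < 1) (x y : Word) :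
    Continuous (fun w : ℕ → Bool => Dw q x y w) := by
  rw [continuous_iff_continuousAt]
  intro w
  have hsing : ∀ i : ℕ, ∀ᶠ w' : ℕ → Bool in 𝓝 w, w' i = w i := by
    intro i
    have hmem : {b : Bool | b = w i} ∈ 𝓝 (w i) := IsOpen.mem_nhds (isOpen_discrete _) rfl
    exact (continuous_apply i).continuousAt hmem
  have key : ∀ N : ℕ, ∀ᶠ w' : ℕ → Bool in 𝓝 w, ∀ i ≤ N, w' i = w i := by
    intro N
    induction N with
    | zero =>
      filter_upwards [hsing 0] with w' h0 i hi
      simpa [Nat.le_zero.mp hi] using h0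
    | succ n ih =>
      filter_upwards [ih, hsing (n + 1)] with w' h1 h2 i hi
      rcases Nat.lt_succ_iff_lt_or_eq.mp (Nat.lt_succ_of_le hi) with h' | h'
      · exact h1 i (by omega)
      · rw [h']; exact h2
  by_cases h : ∃ i, w (i + 1) = w i
  · have hev : ∀ᶠ w' in 𝓝 w, Dw q x y w' = Dw q x y w := by
      filter_upwards [key (Nat.find h + 1)] with w' hw'
      have h' : ∃ i, w' (i + 1) = w' i :=
        ⟨Nat.find h, by
          rw [hw' (Nat.find h + 1) le_rfl, hw' (Nat.find h) (by omega)]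
          exact Nat.find_spec h⟩
      have hj' : Nat.find h' = Nat.find h := by
        rw [Nat.find_eq_iff]
        constructor
        · rw [hw' (Nat.find h + 1) le_rfl, hw' (Nat.find h) (by omega)]
          exact Nat.find_spec h
        · intro i hi hcon
          apply Nat.find_min h hi
          rw [← hw' (i + 1) (by omega), ← hw' i (by omega)]
          exact hcon
      rw [Dw_eq_finite hq0 hq1 x y w' h', Dw_eq_finite hq0 hq1 x y w h, hj',
        hw' 0 (by omega)]
    exact Tendsto.congr' (by filter_upwards [hev] with w' hw using hw.symm)
      tendsto_const_nhds
  · push_neg at h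
    have hval : Dw q x y w = rho q (blocks x) (blocks y) (w 0) :=
      Dw_eq_infinite hq0 hq1 x y w h
    have hF := Metric.tendsto_nhds.mp (Gv_ratio_tendsto hq0 hq1 (blocks x) (blocks y) (w 0))
    rw [ContinuousAt, Metric.tendsto_nhds]
    intro ε hε
    obtain ⟨N, hN⟩ := eventually_atTop.mp (hF ε hε)
    filter_upwards [key (N + 1)] with w' hw'
    show dist (Dw q x y w') (Dw q x y w) < ε
    by_cases h' : ∃ i, w' (i + 1) = w' i
    · have hfind : N + 1 ≤ Nat.find h' := by
        by_contra hc
        push_neg at hc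
        have hj := Nat.find_spec h'
        rw [hw' (Nat.find h' + 1) (by omega), hw' (Nat.find h') (by omega)] at hj
        exact h (Nat.find h') hj
      rw [Dw_eq_finite hq0 hq1 x y w' h', hw' 0 (by omega), hval]
      exact hN (Nat.find h' + 1) (by omega)
    · push_neg at h'
      rw [Dw_eq_infinite hq0 hq1 x y w' h', hval, hw' 0 (by omega)]
      simpa using hε
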